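/- Under the setting of the projected Bellman contraction (Π T^γ is a β-contraction on L²(π) with fixed point θ*ᵀΦ), if J is the fixed point of T^γ (i.e., T^γ J = J), then ‖J − θ*ᵀΦ‖_{L²(π)} ≤ (1/(1−β)) ‖J − Π J‖_{L²(π)}. -/

import Mathlib

open MeasureTheory

theorem stmt_5 {𝕊 : Type*} [MeasurableSpace 𝕊] (π : Measure 𝕊) [IsProbabilityMeasure π]
    (β : ℝ) (hβ0 : 0 < β) (hβ1 : β < 1)
    -- the Bellman operator `T^γ`, a `β`-contraction in `L²(π)`:
    (T : Lp ℝ 2 π → Lp ℝ 2 π)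
    (hT : ∀ f g : Lp ℝ 2 π, ‖T f - T g‖ ≤ β * ‖f - g‖)
    {d : ℕ} (φ : Fin d → Lp ℝ 2 π)
    (K : Submodule ℝ (Lp ℝ 2 π)) (hK : K = Submodule.span ℝ (Set.range φ))
    [K.HasOrthogonalProjection]
    -- `θ*ᵀΦ` is the fixed point of `Π T^γ`:
    (θstar : Fin d → ℝ)
    (hfix : (K.orthogonalProjectionOnto (T (∑ i, θstar i • φ i)) : Lp ℝ 2 π)
      = ∑ i, θstar i • φ i)
    -- `J` is the fixed point of `T^γ`:
    (J : Lp ℝ 2 π) (hJ : T J = J) :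
    ‖J - ∑ i, θstar i • φ i‖ ≤ (1 - β)⁻¹ * ‖J - (K.orthogonalProjectionOnto J : Lp ℝ 2 π)‖ := by
  set Θ : Lp ℝ 2 π := ∑ i, θstar i • φ i with hΘ
  set P := K.orthogonalProjectionOnto
  -- Π is 1-Lipschitz
  have hP : ∀ x : Lp ℝ 2 π, ‖(P x : Lp ℝ 2 π)‖ ≤ ‖x‖ := by
    intro x
    calc ‖(P x : Lp ℝ 2 π)‖ = ‖P x‖ := rfl
    _ ≤ ‖P‖ * ‖x‖ := P.le_opNorm x
    _ ≤ 1 * ‖x‖ := by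
        exact mul_le_mul_of_nonneg_right (Submodule.orthogonalProjectionOnto_norm_le K) (norm_nonneg x)
    _ = ‖x‖ := one_mul _
  have key : ‖(P J : Lp ℝ 2 π) - Θ‖ ≤ β * ‖J - Θ‖ := by
    have : (P J : Lp ℝ 2 π) - Θ = (P (J - T Θ) : Lp ℝ 2 π) := by
      rw [map_sub, Submodule.coe_sub, hfix]
    rw [this]
    calc ‖(P (J - T Θ) : Lp ℝ 2 π)‖ ≤ ‖J - T Θ‖ := hP _
    _ = ‖T J - T Θ‖ := by rw [hJ]
    _ ≤ β * ‖J - Θ‖ := hT J Θ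
  have tri : ‖J - Θ‖ ≤ ‖J - (P J : Lp ℝ 2 π)‖ + ‖(P J : Lp ℝ 2 π) - Θ‖ := by
    simpa using norm_sub_le_norm_sub_add_norm_sub J (P J : Lp ℝ 2 π) Θ
  have h1 : (1 - β) * ‖J - Θ‖ ≤ ‖J - (P J : Lp ℝ 2 π)‖ := by nlinarith
  have h2 : (0:ℝ) < 1 - β := by linarith
  calc ‖J - Θ‖ = (1 - β)⁻¹ * ((1 - β) * ‖J - Θ‖) := by field_simp
  _ ≤ (1 - β)⁻¹ * ‖J - (P J : Lp ℝ 2 π)‖ :=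
      mul_le_mul_of_nonneg_left h1 (by positivity)
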